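/- Let G be a simple graph in which a, b are closed twins. If θ is a second-order stationary point of the Kuramoto energy E_G(θ), then θ_a ≡ θ_b (mod 2π), i.e., the phasors of a and b coincide. -/

import Mathlib

open Real Classical

noncomputable section

/-- Real-valued adjacency indicator of a simple graph. -/
def adjW {V : Type*} (G : SimpleGraph V) (i j : V) : ℝ := if G.Adj i j then 1 else 0

/-- The phasor (unit vector in the plane) associated with an angle. -/
def phasor (t : ℝ) : ℝ × ℝ := (Real.cos t, Real.sin t)

/-- The Kuramoto energy. -/
def kEnergy {V : Type*} [Fintype V] (G : SimpleGraph V) (θ : V → ℝ) : ℝ :=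
  (1 / 2) * ∑ i, ∑ j, adjW G i j * (1 - Real.cos (θ i - θ j))

/-- The Hessian of the Kuramoto energy. -/
def kHess {V : Type*} [Fintype V] (G : SimpleGraph V) (θ : V → ℝ) : Matrix V V ℝ :=
  fun i j =>
    if i = j then ∑ k, adjW G i k * Real.cos (θ i - θ k)
    else -(adjW G i j * Real.cos (θ i - θ j))

/-- First-order (equilibrium) condition of the homogeneous Kuramoto model. -/
def IsEquilibrium {V : Type*} [Fintype V] (G : SimpleGraph V) (θ : V → ℝ) : Prop :=
  ∀ i, ∑ j, adjW G i j * Real.sin (θ j - θ i) = 0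

/-- Second-order stationary point of the Kuramoto energy. -/
def IsSOSP {V : Type*} [Fintype V] (G : SimpleGraph V) (θ : V → ℝ) : Prop :=
  IsEquilibrium G θ ∧ (kHess G θ).PosSemidef

/-- Sum of a function supported on two points, given pointwise as an if-then-else. -/
lemma sum_two_pt {n : ℕ} (a b : Fin n) (hab : a ≠ b) (u v : ℝ) :
    ∑ j, (if j = a then u else if j = b then v else 0) = u + v := by
  have h : ∀ j : Fin n, (if j = a then u else if j = b then v else 0)
      = (if j = a then u else 0) + (if j = b then v else 0) := by
    intro j
    by_cases h1 : j = a
    · subst h1; simp [hab]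
    · by_cases h2 : j = b <;> simp [h1, h2, Ne.symm hab]
  rw [Finset.sum_congr rfl (fun j _ => h j), Finset.sum_add_distrib]
  simp

theorem closed_twins_sync_at_sosp
    {n : ℕ} (G : SimpleGraph (Fin n)) (θ : Fin n → ℝ)
    (a b : Fin n) (hab : a ≠ b)
    (htwin : insert a (G.neighborSet a) = insert b (G.neighborSet b))
    (hsosp : IsSOSP G θ) :
    phasor (θ a) = phasor (θ b) := by
  -- adjacency facts
  have hadj : G.Adj a b := by
    have hb : b ∈ insert a (G.neighborSet a) := by
      rw [htwin]; exact Set.mem_insert _ _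
    rcases hb with h | h
    · exact absurd h.symm hab
    · exact h
  have hW_ab : adjW G a b = 1 := by simp [adjW, hadj]
  have hW_ba : adjW G b a = 1 := by simp [adjW, hadj.symm]
  have hW_aa : adjW G a a = 0 := by simp [adjW]
  have hW_bb : adjW G b b = 0 := by simp [adjW]
  have hsame : ∀ k, k ≠ a → k ≠ b → adjW G a k = adjW G b k := by
    intro k hka hkb
    have : k ∈ insert a (G.neighborSet a) ↔ k ∈ insert b (G.neighborSet b) := by rw [htwin]
    simp only [Set.mem_insert_iff, SimpleGraph.mem_neighborSet, hka, hkb, false_or] at this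
    simp [adjW, this]
  set δ : ℝ := θ a - θ b with hδ
  set m : ℝ := (θ a + θ b) / 2 with hm
  set s : ℝ := Real.sin (δ / 2) with hs
  set c : ℝ := Real.cos (δ / 2) with hc
  have hθa : θ a = m + δ / 2 := by rw [hm, hδ]; ring
  have hθb : θ b = m - δ / 2 := by rw [hm, hδ]; ring
  have hpyth : s ^ 2 + c ^ 2 = 1 := Real.sin_sq_add_cos_sq (δ / 2)
  have hcosδ : Real.cos δ = c ^ 2 - s ^ 2 := by
    rw [show δ = δ/2 + δ/2 by ring, Real.cos_add]; ring
  have hsinδ : Real.sin δ = 2 * s * c := by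
    rw [show δ = δ/2 + δ/2 by ring, Real.sin_add]; ring
  -- equilibrium
  have heqa := hsosp.1 a
  have heqb := hsosp.1 b
  -- PSD quadratic form with test vector e_a - e_b
  obtain ⟨_, hpsd⟩ := Matrix.posSemidef_iff_dotProduct_mulVec.mp hsosp.2
  set x : Fin n → ℝ := fun i => if i = a then 1 else if i = b then -1 else 0 with hx
  have hQ0 := hpsd x
  have hstar : star x = x := by funext i; simp [hx]
  rw [hstar] at hQ0
  set H := kHess G θ with hH
  have hmv : ∀ i, (H.mulVec x) i = H i a - H i b := by
    intro i
    show ∑ j, H i j * x j = H i a - H i b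
    have h : ∀ j, H i j * x j = (if j = a then H i a else if j = b then -(H i b) else 0) := by
      intro j; by_cases h1 : j = a <;> by_cases h2 : j = b <;>
        simp [hx, h1, h2, Ne.symm hab] <;> ring
    rw [Finset.sum_congr rfl (fun j _ => h j), sum_two_pt a b hab]
    ring
  have hQval : dotProduct x (H.mulVec x) = (H a a - H a b) - (H b a - H b b) := by
    unfold dotProduct
    have h : ∀ i, x i * (H.mulVec x) i
        = (if i = a then (H a a - H a b) else if i = b then -(H b a - H b b) else 0) := by
      intro i
      rw [hmv i]
      by_cases h1 : i = a <;> by_cases h2 : i = b <;> simp [hx, h1, h2, Ne.symm hab] <;> ring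
    rw [Finset.sum_congr rfl (fun i _ => h i), sum_two_pt a b hab]
    ring
  rw [hQval] at hQ0
  have hHab : H a b = -(Real.cos δ) := by
    rw [hH]; unfold kHess; simp [hab, hW_ab, hδ]
  have hHba : H b a = -(Real.cos δ) := by
    rw [hH]; unfold kHess
    simp only [if_neg hab.symm, hW_ba, one_mul]
    rw [show θ b - θ a = -δ by rw [hδ]; ring, Real.cos_neg]
  have hHaa : H a a = ∑ k, adjW G a k * Real.cos (θ a - θ k) := by
    rw [hH]; unfold kHess; simp
  have hHbb : H b b = ∑ k, adjW G b k * Real.cos (θ b - θ k) := by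
    rw [hH]; unfold kHess; simp
  rw [hHaa, hHbb, hHab, hHba] at hQ0
  set SA := ∑ k, adjW G a k * Real.cos (θ a - θ k) with hSA
  set SB := ∑ k, adjW G b k * Real.cos (θ b - θ k) with hSB
  have hQ' : 0 ≤ SA + SB + 2 * Real.cos δ := by linarith [hQ0]
  -- per-term key identity
  have hkey : ∀ k : Fin n,
      c * (adjW G a k * Real.sin (θ k - θ a) - adjW G b k * Real.sin (θ k - θ b))
      + s * (adjW G a k * Real.cos (θ a - θ k) + adjW G b k * Real.cos (θ b - θ k))
      = (if k = a then -s else if k = b then -s else 0) := by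
    have e1 : θ a - θ b = δ := hδ.symm
    have e2 : θ b - θ a = -δ := by rw [hδ]; ring
    intro k
    by_cases h1 : k = a
    · rw [h1, if_pos rfl, hW_aa, hW_ba, e1, e2, Real.cos_neg, hsinδ, hcosδ]
      linear_combination (-s) * hpyth
    · by_cases h2 : k = b
      · rw [h2, if_neg (Ne.symm hab), if_pos rfl, hW_ab, hW_bb, e2,
          Real.sin_neg, e1, hsinδ, hcosδ]
        linear_combination (-s) * hpyth
      · rw [if_neg h1, if_neg h2]
        rw [← hsame k h1 h2, hθa, hθb]
        simp only [Real.sin_sub, Real.cos_sub, Real.sin_add, Real.cos_add, ← hs, ← hc]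
        ring
  -- summed identity
  have hcongr := Finset.sum_congr rfl (fun k (_ : k ∈ Finset.univ) => hkey k)
  rw [sum_two_pt a b hab (-s) (-s), Finset.sum_add_distrib, ← Finset.mul_sum,
    ← Finset.mul_sum, Finset.sum_sub_distrib, Finset.sum_add_distrib,
    heqa, heqb] at hcongr
  have h1 : s * (SA + SB) = -2 * s := by
    rw [← hSA, ← hSB] at hcongr
    linarith [hcongr]
  have h4 : s ^ 2 * (SA + SB) = -2 * s ^ 2 := by
    calc s ^ 2 * (SA + SB) = s * (s * (SA + SB)) := by ring
      _ = s * (-2 * s) := by rw [h1]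
      _ = -2 * s ^ 2 := by ring
  have h3' : 0 ≤ s ^ 2 * (SA + SB) + 2 * (s ^ 2 * Real.cos δ) := by
    calc (0:ℝ) ≤ s ^ 2 * (SA + SB + 2 * Real.cos δ) := mul_nonneg (sq_nonneg s) hQ'
      _ = s ^ 2 * (SA + SB) + 2 * (s ^ 2 * Real.cos δ) := by ring
  have h6 : s ^ 2 * Real.cos δ = s ^ 2 * c ^ 2 - s ^ 4 := by rw [hcosδ]; ring
  have h7 : s ^ 2 * c ^ 2 = s ^ 2 - s ^ 4 := by linear_combination s ^ 2 * hpyth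
  have h5 : s ^ 4 ≤ 0 := by linarith
  have hs0 : s = 0 := by
    have : s ^ 4 = 0 := le_antisymm h5 (by positivity)
    exact pow_eq_zero_iff (by norm_num) |>.mp this
  have hcos1 : Real.cos δ = 1 := by
    rw [hs0] at hpyth
    rw [hcosδ, hs0]
    norm_num at hpyth ⊢
    exact hpyth
  have hsin0 : Real.sin δ = 0 := by rw [hsinδ, hs0]; ring
  have hθab : θ a = θ b + δ := by rw [hδ]; ring
  unfold phasor
  rw [hθab, Prod.mk.injEq]
  constructor
  · rw [Real.cos_add, hcos1, hsin0]; ring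
  · rw [Real.sin_add, hcos1, hsin0]; ring

end
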